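/- Let γ : ℝ × ℝ → ℝ² be continuously differentiable and 2π-periodic in its second variable, and let n ≥ 1 be a natural number. Then for every t ∈ [0, 2π]: |∫₀^{t} γ(u, n·u) du − ∫₀^{t} (1/2π)·∫₀^{2π} γ(u, v) dv du| ≤ (4π/n)·( π·sup_{(u,v) ∈ [0,2π]×ℝ} |∂ₜγ(u, v)| + sup_{(u,v) ∈ [0,2π]×ℝ} |γ(u, v)| ). In particular this quantity is bounded by (4π²/n)·‖γ‖_{C¹([0,2π]×S¹)}. -/

import Mathlib

open Real Set

open MeasureTheory intervalIntegral

set_option maxHeartbeats 1000000 in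
lemma avg_key {E : Type*} [NormedAddCommGroup E] [NormedSpace ℝ E] [CompleteSpace E]
    (Γ : ℝ → ℝ → E) (M₁ M₂ : ℝ)
    (hcont : Continuous (Function.uncurry Γ))
    (hper : ∀ u, Function.Periodic (Γ u) (2 * π))
    (hlip : ∀ v : ℝ, ∀ u ∈ Icc (0:ℝ) (2*π), ∀ s ∈ Icc (0:ℝ) (2*π),
        ‖Γ u v - Γ s v‖ ≤ M₁ * |u - s|)
    (hbd : ∀ u ∈ Icc (0:ℝ) (2*π), ∀ v : ℝ, ‖Γ u v‖ ≤ M₂)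
    (n : ℕ) (hn : 1 ≤ n) (t : ℝ) (ht : t ∈ Icc (0:ℝ) (2*π)) :
    ‖(∫ u in (0:ℝ)..t, Γ u (n * u)) -
        ∫ u in (0:ℝ)..t, (2*π)⁻¹ • ∫ v in (0:ℝ)..(2*π), Γ u v‖
      ≤ 4 * π / n * (π * M₁ + M₂) := by
  have hπ : (0:ℝ) < π := pi_pos
  have hn0 : (0:ℝ) < (n:ℝ) := by exact_mod_cast hn
  set T : ℝ := 2 * π / n with hTdef
  have hT : 0 < T := by positivity
  set A : ℝ → E := fun u => (2*π)⁻¹ • ∫ v in (0:ℝ)..(2*π), Γ u v with hAdef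
  have h0mem : (0:ℝ) ∈ Icc (0:ℝ) (2*π) := ⟨le_refl _, by positivity⟩
  have h2pmem : (2*π) ∈ Icc (0:ℝ) (2*π) := ⟨by positivity, le_refl _⟩
  have hM₁0 : 0 ≤ M₁ := by
    have := hlip 0 (2*π) h2pmem 0 h0mem
    have h2 : (0:ℝ) ≤ M₁ * |2*π - 0| := le_trans (norm_nonneg _) this
    nlinarith [abs_of_pos (show (0:ℝ) < 2*π - 0 by linarith)]
  have hM₂0 : 0 ≤ M₂ := le_trans (norm_nonneg _) (hbd 0 h0mem 0)
  have hΓv : ∀ u, Continuous (Γ u) := fun u =>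
    hcont.comp (continuous_const.prodMk continuous_id)
  have hΓn : Continuous fun u => Γ u ((n:ℝ) * u) :=
    hcont.comp (continuous_id.prodMk (continuous_const.mul continuous_id))
  have habs2π : |2*π - 0| = 2*π := by rw [sub_zero, abs_of_pos (by positivity)]
  have hA_lip : ∀ u ∈ Icc (0:ℝ) (2*π), ∀ s ∈ Icc (0:ℝ) (2*π),
      ‖A u - A s‖ ≤ M₁ * |u - s| := by
    intro u hu s hs
    have h1 : A u - A s = (2*π)⁻¹ • ∫ v in (0:ℝ)..(2*π), (Γ u v - Γ s v) := by
      rw [intervalIntegral.integral_sub ((hΓv u).intervalIntegrable _ _)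
        ((hΓv s).intervalIntegrable _ _), smul_sub]
    rw [h1, norm_smul, Real.norm_eq_abs, abs_of_pos (show (0:ℝ) < (2*π)⁻¹ by positivity)]
    have h2 : ‖∫ v in (0:ℝ)..(2*π), (Γ u v - Γ s v)‖ ≤ (M₁ * |u - s|) * |2*π - 0| :=
      intervalIntegral.norm_integral_le_of_norm_le_const (fun v _ => hlip v u hu s hs)
    rw [habs2π] at h2
    calc (2*π)⁻¹ * ‖∫ v in (0:ℝ)..(2*π), (Γ u v - Γ s v)‖
        ≤ (2*π)⁻¹ * ((M₁ * |u - s|) * (2*π)) := by gcongr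
      _ = M₁ * |u - s| := by field_simp
  have hA_bd : ∀ u ∈ Icc (0:ℝ) (2*π), ‖A u‖ ≤ M₂ := by
    intro u hu
    have h2 : ‖∫ v in (0:ℝ)..(2*π), Γ u v‖ ≤ M₂ * |2*π - 0| :=
      intervalIntegral.norm_integral_le_of_norm_le_const (fun v _ => hbd u hu v)
    rw [habs2π] at h2
    rw [hAdef, norm_smul, Real.norm_eq_abs, abs_of_pos (show (0:ℝ) < (2*π)⁻¹ by positivity)]
    calc (2*π)⁻¹ * ‖∫ v in (0:ℝ)..(2*π), Γ u v‖ ≤ (2*π)⁻¹ * (M₂ * (2*π)) := by gcongr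
      _ = M₂ := by field_simp
  have hA_contOn : ContinuousOn A (Icc (0:ℝ) (2*π)) := by
    have : LipschitzOnWith M₁.toNNReal A (Icc (0:ℝ) (2*π)) := by
      apply LipschitzOnWith.of_dist_le_mul
      intro x hx y hy
      rw [dist_eq_norm, Real.dist_eq, Real.coe_toNNReal _ hM₁0]
      exact hA_lip x hx y hy
    exact this.continuousOn
  have hf_cont : ContinuousOn (fun u => Γ u ((n:ℝ) * u) - A u) (Icc (0:ℝ) (2*π)) :=
    hΓn.continuousOn.sub hA_contOn
  have hf_int : ∀ c ∈ Icc (0:ℝ) (2*π), ∀ d ∈ Icc (0:ℝ) (2*π),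
      IntervalIntegrable (fun u => Γ u ((n:ℝ) * u) - A u) volume c d := by
    intro c hc d hd
    exact (hf_cont.mono (uIcc_subset_Icc hc hd)).intervalIntegrable
  have hA_int : ∀ c ∈ Icc (0:ℝ) (2*π), ∀ d ∈ Icc (0:ℝ) (2*π),
      IntervalIntegrable A volume c d := fun c hc d hd =>
    (hA_contOn.mono (uIcc_subset_Icc hc hd)).intervalIntegrable
  -- rewrite goal as a single integral
  have hgoal : (∫ u in (0:ℝ)..t, Γ u ((n:ℝ) * u)) - ∫ u in (0:ℝ)..t, A u
      = ∫ u in (0:ℝ)..t, (Γ u ((n:ℝ) * u) - A u) :=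
    (intervalIntegral.integral_sub (hΓn.intervalIntegrable _ _) (hA_int 0 h0mem t ht)).symm
  rw [show (∫ u in (0:ℝ)..t, (2*π)⁻¹ • ∫ v in (0:ℝ)..(2*π), Γ u v) = ∫ u in (0:ℝ)..t, A u from rfl,
    hgoal]
  -- partition
  set k : ℕ := min n ⌊t / T⌋₊ with hkdef
  have hk_le_n : k ≤ n := min_le_left _ _
  have hak_le_t : (k:ℝ) * T ≤ t := by
    have h1 : (k:ℝ) ≤ (⌊t / T⌋₊ : ℝ) := by exact_mod_cast min_le_right n ⌊t / T⌋₊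
    have h2 : (⌊t / T⌋₊ : ℝ) ≤ t / T := Nat.floor_le (div_nonneg ht.1 hT.le)
    calc (k:ℝ) * T ≤ (t / T) * T := by nlinarith
      _ = t := by field_simp
  have hnT : (n:ℝ) * T = 2 * π := by rw [hTdef]; field_simp
  have ht_le : t ≤ (k:ℝ) * T + T := by
    rcases le_or_gt n ⌊t / T⌋₊ with h | h
    · have hk : k = n := min_eq_left h
      rw [hk]
      nlinarith [ht.2]
    · have hk : k = ⌊t / T⌋₊ := min_eq_right h.le
      have h2 : t / T < (⌊t / T⌋₊ : ℝ) + 1 := Nat.lt_floor_add_one _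
      have h3 : t < ((⌊t / T⌋₊ : ℝ) + 1) * T := by
        rw [← div_lt_iff₀ hT] at *; linarith [(mul_div_cancel_right₀ ((⌊t / T⌋₊ : ℝ) + 1) (ne_of_gt hT))]
      rw [hk]; nlinarith
  have hmem : ∀ j : ℕ, j ≤ k → ((j:ℝ) * T) ∈ Icc (0:ℝ) (2*π) := by
    intro j hj
    constructor
    · exact mul_nonneg (Nat.cast_nonneg j) hT.le
    · have : (j:ℝ) * T ≤ (k:ℝ) * T := by
        have : (j:ℝ) ≤ (k:ℝ) := by exact_mod_cast hj
        nlinarith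
      linarith [ht.2, hak_le_t]
  have hsplit : (∫ u in (0:ℝ)..t, (Γ u ((n:ℝ) * u) - A u))
      = (∑ j ∈ Finset.range k, ∫ u in ((j:ℝ)*T)..(((j:ℝ)+1)*T), (Γ u ((n:ℝ) * u) - A u))
        + ∫ u in ((k:ℝ)*T)..t, (Γ u ((n:ℝ) * u) - A u) := by
    have h1 : ∑ j ∈ Finset.range k,
        (∫ u in (((j:ℕ):ℝ)*T)..((((j+1:ℕ)):ℝ)*T), (Γ u ((n:ℝ) * u) - A u))
        = ∫ u in (((0:ℕ):ℝ)*T)..(((k:ℕ):ℝ)*T), (Γ u ((n:ℝ) * u) - A u) := by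
      apply intervalIntegral.sum_integral_adjacent_intervals
      intro j hj
      exact hf_int _ (hmem j (le_of_lt hj)) _ (hmem (j+1) hj)
    have h2 : ∀ j : ℕ, (((j+1:ℕ)):ℝ) = (j:ℝ) + 1 := by intro j; push_cast; ring
    simp only [h2] at h1
    rw [h1]
    simp only [Nat.cast_zero, zero_mul]
    rw [intervalIntegral.integral_add_adjacent_intervals
      (hf_int 0 h0mem _ (hmem k le_rfl))
      (hf_int _ (hmem k le_rfl) t ht)]
  rw [hsplit]
  -- per-interval bound
  have hEj : ∀ j : ℕ, j < k →
      ‖∫ u in ((j:ℝ)*T)..(((j:ℝ)+1)*T), (Γ u ((n:ℝ) * u) - A u)‖ ≤ T^2 * M₁ := by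
    intro j hj
    set c : ℝ := (j:ℝ) * T with hcdef
    have hcc : ((j:ℝ)+1) * T = c + T := by ring
    have hc : c ∈ Icc (0:ℝ) (2*π) := hmem j (le_of_lt hj)
    have hc' : c + T ∈ Icc (0:ℝ) (2*π) := by
      have := hmem (j+1) hj
      push_cast at this
      rwa [show ((j:ℝ)+1) * T = c + T from by ring] at this
    rw [hcc]
    -- frozen integral equals T • A c
    have hΓcn : Continuous fun u => Γ c ((n:ℝ) * u) :=
      (hΓv c).comp (continuous_const.mul continuous_id)
    have hfreeze : (∫ u in c..(c+T), Γ c ((n:ℝ) * u)) = T • A c := by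
      have e1 : (∫ u in c..(c+T), Γ c ((n:ℝ) * u))
          = ((n:ℝ))⁻¹ • ∫ v in ((n:ℝ)*c)..((n:ℝ)*(c+T)), Γ c v :=
        intervalIntegral.integral_comp_mul_left (fun v => Γ c v) (ne_of_gt hn0)
      have e2 : (n:ℝ) * (c + T) = (n:ℝ) * c + 2 * π := by
        rw [mul_add, hnT]
      have e3 : (∫ v in ((n:ℝ)*c)..((n:ℝ)*c + 2*π), Γ c v)
          = ∫ v in (0:ℝ)..(0 + 2*π), Γ c v :=
        (hper c).intervalIntegral_add_eq ((n:ℝ)*c) 0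
      rw [e1, e2, e3, zero_add, hAdef, smul_smul]
      congr 1
      rw [hTdef]
      field_simp
    have hconst : (∫ _u in c..(c+T), A c) = T • A c := by
      rw [intervalIntegral.integral_const, add_sub_cancel_left]
    have int1 : IntervalIntegrable (fun u => Γ u ((n:ℝ)*u)) volume c (c+T) :=
      hΓn.intervalIntegrable _ _
    have int2 : IntervalIntegrable (fun u => Γ c ((n:ℝ)*u)) volume c (c+T) :=
      hΓcn.intervalIntegrable _ _
    have int3 : IntervalIntegrable A volume c (c+T) := hA_int _ hc _ hc'
    have int4 : IntervalIntegrable (fun _u => A c) volume c (c+T) :=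
      intervalIntegrable_const
    have hdecomp : (∫ u in c..(c+T), (Γ u ((n:ℝ) * u) - A u))
        = (∫ u in c..(c+T), (Γ u ((n:ℝ)*u) - Γ c ((n:ℝ)*u)))
          - ∫ u in c..(c+T), (A u - A c) := by
      have haux : (∫ u in c..(c+T), (Γ u ((n:ℝ)*u) - Γ c ((n:ℝ)*u)))
          - ∫ u in c..(c+T), (A u - A c)
          = (∫ u in c..(c+T), Γ u ((n:ℝ)*u)) - ∫ u in c..(c+T), A u := by
        rw [intervalIntegral.integral_sub int1 int2,
          intervalIntegral.integral_sub int3 int4, hfreeze, hconst]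
        abel
      rw [intervalIntegral.integral_sub int1 int3, haux]
    rw [hdecomp]
    -- the triangle-shaped bound
    have hcle : c ≤ c + T := by linarith
    have hIoc : uIoc c (c + T) = Ioc c (c + T) := uIoc_of_le hcle
    have hgint : IntervalIntegrable (fun u => M₁ * (u - c)) volume c (c+T) :=
      (continuous_const.mul (continuous_id.sub continuous_const)).intervalIntegrable _ _
    have hgval : |∫ u in c..(c+T), M₁ * (u - c)| = M₁ * (T^2/2) := by
      rw [intervalIntegral.integral_const_mul]
      have : (∫ u in c..(c+T), (u - c)) = ∫ x in (c-c)..(c+T-c), x :=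
        intervalIntegral.integral_comp_sub_right (fun x => x) c
      rw [this, sub_self, add_sub_cancel_left, integral_id]
      have heq : M₁ * ((T ^ 2 - 0 ^ 2) / 2) = M₁ * (T^2/2) := by ring
      rw [heq, abs_of_nonneg (mul_nonneg hM₁0 (by positivity))]
    have humem : ∀ u ∈ uIoc c (c + T), u ∈ Icc (0:ℝ) (2*π) ∧ c ≤ u ∧ u ≤ c + T := by
      intro u hu
      rw [hIoc] at hu
      exact ⟨⟨le_trans hc.1 hu.1.le, le_trans hu.2 hc'.2⟩, hu.1.le, hu.2⟩
    have hb1 : ‖∫ u in c..(c+T), (Γ u ((n:ℝ)*u) - Γ c ((n:ℝ)*u))‖ ≤ M₁ * (T^2/2) := by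
      rw [← hgval]
      apply intervalIntegral.norm_integral_le_abs_of_norm_le _ hgint
      filter_upwards [MeasureTheory.ae_restrict_mem measurableSet_uIoc] with u hu
      obtain ⟨hu1, hu2, _⟩ := humem u hu
      calc ‖Γ u ((n:ℝ)*u) - Γ c ((n:ℝ)*u)‖ ≤ M₁ * |u - c| := hlip _ u hu1 c hc
        _ = M₁ * (u - c) := by rw [abs_of_nonneg (by linarith)]
    have hb2 : ‖∫ u in c..(c+T), (A u - A c)‖ ≤ M₁ * (T^2/2) := by
      rw [← hgval]
      apply intervalIntegral.norm_integral_le_abs_of_norm_le _ hgint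
      filter_upwards [MeasureTheory.ae_restrict_mem measurableSet_uIoc] with u hu
      obtain ⟨hu1, hu2, _⟩ := humem u hu
      calc ‖A u - A c‖ ≤ M₁ * |u - c| := hA_lip u hu1 c hc
        _ = M₁ * (u - c) := by rw [abs_of_nonneg (by linarith)]
    calc ‖(∫ u in c..(c+T), (Γ u ((n:ℝ)*u) - Γ c ((n:ℝ)*u)))
          - ∫ u in c..(c+T), (A u - A c)‖
        ≤ ‖∫ u in c..(c+T), (Γ u ((n:ℝ)*u) - Γ c ((n:ℝ)*u))‖
          + ‖∫ u in c..(c+T), (A u - A c)‖ := norm_sub_le _ _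
      _ ≤ M₁ * (T^2/2) + M₁ * (T^2/2) := add_le_add hb1 hb2
      _ = T^2 * M₁ := by ring
  -- tail bound
  have htail : ‖∫ u in ((k:ℝ)*T)..t, (Γ u ((n:ℝ) * u) - A u)‖ ≤ 2 * M₂ * T := by
    have hC : ‖∫ u in ((k:ℝ)*T)..t, (Γ u ((n:ℝ) * u) - A u)‖ ≤ (2*M₂) * |t - (k:ℝ)*T| := by
      apply intervalIntegral.norm_integral_le_of_norm_le_const
      intro u hu
      rw [uIoc_of_le hak_le_t] at hu
      have hu1 : u ∈ Icc (0:ℝ) (2*π) := by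
        constructor
        · exact le_trans (hmem k le_rfl).1 hu.1.le
        · exact le_trans hu.2 ht.2
      calc ‖Γ u ((n:ℝ)*u) - A u‖ ≤ ‖Γ u ((n:ℝ)*u)‖ + ‖A u‖ := norm_sub_le _ _
        _ ≤ M₂ + M₂ := add_le_add (hbd u hu1 _) (hA_bd u hu1)
        _ = 2 * M₂ := by ring
    have habs : |t - (k:ℝ)*T| ≤ T := by
      rw [abs_of_nonneg (by linarith)]
      linarith
    calc ‖∫ u in ((k:ℝ)*T)..t, (Γ u ((n:ℝ) * u) - A u)‖
        ≤ (2*M₂) * |t - (k:ℝ)*T| := hC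
      _ ≤ (2*M₂) * T := by nlinarith
      _ = 2 * M₂ * T := by ring
  -- assemble
  calc ‖(∑ j ∈ Finset.range k, ∫ u in ((j:ℝ)*T)..(((j:ℝ)+1)*T), (Γ u ((n:ℝ) * u) - A u))
        + ∫ u in ((k:ℝ)*T)..t, (Γ u ((n:ℝ) * u) - A u)‖
      ≤ ‖∑ j ∈ Finset.range k, ∫ u in ((j:ℝ)*T)..(((j:ℝ)+1)*T), (Γ u ((n:ℝ) * u) - A u)‖
        + ‖∫ u in ((k:ℝ)*T)..t, (Γ u ((n:ℝ) * u) - A u)‖ := norm_add_le _ _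
    _ ≤ (∑ _j ∈ Finset.range k, T^2 * M₁) + 2 * M₂ * T := by
        exact add_le_add
          (norm_sum_le_of_le _ (fun j hj => hEj j (Finset.mem_range.mp hj))) htail
    _ = (k:ℝ) * (T^2 * M₁) + 2 * M₂ * T := by
        rw [Finset.sum_const, Finset.card_range, nsmul_eq_mul]
    _ ≤ (n:ℝ) * (T^2 * M₁) + 2 * M₂ * T := by
        have hkn : (k:ℝ) ≤ (n:ℝ) := by exact_mod_cast hk_le_n
        have : (0:ℝ) ≤ T^2 * M₁ := by positivity
        nlinarith
    _ = 4 * π / n * (π * M₁ + M₂) := by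
        rw [hTdef]
        field_simp
        ring


set_option maxHeartbeats 1000000 in
/-- The fundamental estimate of convex integration: if `γ = (γ₁, γ₂) : ℝ × ℝ → ℝ²` is `C¹` and
`2π`-periodic in its second variable, then for `n ≥ 1` and `t ∈ [0, 2π]`, the (Euclidean) distance
between `∫₀ᵗ γ(u, nu) du` and `∫₀ᵗ (1/2π) ∫₀^{2π} γ(u, v) dv du` is at most
`(4π/n)·(π·sup‖∂ₜγ‖ + sup‖γ‖)`, the suprema being taken over `[0, 2π] × ℝ`. -/
theorem convex_integration_estimate
    (γ₁ γ₂ : ℝ → ℝ → ℝ)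
    (h1 : ContDiff ℝ 1 (Function.uncurry γ₁))
    (h2 : ContDiff ℝ 1 (Function.uncurry γ₂))
    (hper1 : ∀ u v : ℝ, γ₁ u (v + 2 * π) = γ₁ u v)
    (hper2 : ∀ u v : ℝ, γ₂ u (v + 2 * π) = γ₂ u v)
    (n : ℕ) (hn : 1 ≤ n)
    (M₁ M₂ : ℝ)
    (hM₁ : ∀ u ∈ Icc (0 : ℝ) (2 * π), ∀ v : ℝ,
      Real.sqrt ((deriv (fun w => γ₁ w v) u) ^ 2 + (deriv (fun w => γ₂ w v) u) ^ 2) ≤ M₁)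
    (hM₂ : ∀ u ∈ Icc (0 : ℝ) (2 * π), ∀ v : ℝ,
      Real.sqrt ((γ₁ u v) ^ 2 + (γ₂ u v) ^ 2) ≤ M₂) :
    ∀ t ∈ Icc (0 : ℝ) (2 * π),
      Real.sqrt
          (((∫ u in (0 : ℝ)..t, γ₁ u (n * u)) -
              ∫ u in (0 : ℝ)..t, (1 / (2 * π)) * ∫ v in (0 : ℝ)..(2 * π), γ₁ u v) ^ 2 +
            ((∫ u in (0 : ℝ)..t, γ₂ u (n * u)) -
              ∫ u in (0 : ℝ)..t, (1 / (2 * π)) * ∫ v in (0 : ℝ)..(2 * π), γ₂ u v) ^ 2)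
        ≤ 4 * π / n * (π * M₁ + M₂) := by
  intro t ht
  set L : (Fin 2 → ℝ) ≃L[ℝ] EuclideanSpace ℝ (Fin 2) :=
    (PiLp.continuousLinearEquiv 2 ℝ (fun _ : Fin 2 => ℝ)).symm with hLdef
  set Γ : ℝ → ℝ → EuclideanSpace ℝ (Fin 2) := fun u v => L ![γ₁ u v, γ₂ u v] with hΓdef
  -- norm formula
  have hnorm : ∀ x y : ℝ, ‖L ![x, y]‖ = Real.sqrt (x ^ 2 + y ^ 2) := by
    intro x y
    rw [EuclideanSpace.norm_eq]
    congr 1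
    rw [Fin.sum_univ_two]
    have h0 : (L ![x, y]) 0 = x := rfl
    have h1 : (L ![x, y]) 1 = y := rfl
    rw [h0, h1, Real.norm_eq_abs, Real.norm_eq_abs, sq_abs, sq_abs]
  have hcont : Continuous (Function.uncurry Γ) := by
    apply L.continuous.comp
    apply continuous_pi
    intro i
    fin_cases i
    · exact h1.continuous
    · exact h2.continuous
  have hper : ∀ u, Function.Periodic (Γ u) (2 * π) := by
    intro u v
    show L ![γ₁ u (v + 2*π), γ₂ u (v + 2*π)] = L ![γ₁ u v, γ₂ u v]
    rw [hper1, hper2]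
  have hlip : ∀ v : ℝ, ∀ u ∈ Icc (0:ℝ) (2*π), ∀ s ∈ Icc (0:ℝ) (2*π),
      ‖Γ u v - Γ s v‖ ≤ M₁ * |u - s| := by
    intro v u hu s hs
    have hdiff1 : Differentiable ℝ (fun w => γ₁ w v) := by
      intro w
      exact ((h1.differentiable one_ne_zero) (w, v)).comp (𝕜 := ℝ) w
        (differentiable_id.prodMk (differentiable_const v) w)
    have hdiff2 : Differentiable ℝ (fun w => γ₂ w v) := by
      intro w
      exact ((h2.differentiable one_ne_zero) (w, v)).comp (𝕜 := ℝ) w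
        (differentiable_id.prodMk (differentiable_const v) w)
    have hder : ∀ w : ℝ, HasDerivAt (fun w' => Γ w' v)
        (L ![deriv (fun w' => γ₁ w' v) w, deriv (fun w' => γ₂ w' v) w]) w := by
      intro w
      have hpi : HasDerivAt (fun w' => ![γ₁ w' v, γ₂ w' v])
          (![deriv (fun w' => γ₁ w' v) w, deriv (fun w' => γ₂ w' v) w]) w := by
        apply hasDerivAt_pi.mpr
        intro i
        fin_cases i
        · simpa using (hdiff1 w).hasDerivAt
        · simpa using (hdiff2 w).hasDerivAt
      exact ((L : (Fin 2 → ℝ) →L[ℝ] EuclideanSpace ℝ (Fin 2)).hasFDerivAt).comp_hasDerivAt w hpi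
    have := Convex.norm_image_sub_le_of_norm_hasDerivWithin_le
      (f := fun w => Γ w v)
      (f' := fun w => L ![deriv (fun w' => γ₁ w' v) w, deriv (fun w' => γ₂ w' v) w])
      (C := M₁) (s := Icc (0:ℝ) (2*π))
      (fun x _ => (hder x).hasDerivWithinAt)
      (fun x hx => by rw [hnorm]; exact hM₁ x hx v)
      (convex_Icc _ _) hs hu
    simpa [Real.norm_eq_abs] using this
  have hbd : ∀ u ∈ Icc (0:ℝ) (2*π), ∀ v : ℝ, ‖Γ u v‖ ≤ M₂ := by
    intro u hu v
    rw [hΓdef]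
    rw [hnorm]
    exact hM₂ u hu v
  have key := avg_key Γ M₁ M₂ hcont hper hlip hbd n hn t ht
  -- component computations
  have hΓn_cont : Continuous fun u => Γ u ((n:ℝ) * u) :=
    hcont.comp (continuous_id.prodMk (continuous_const.mul continuous_id))
  have hA_cont : Continuous fun u => (2*π)⁻¹ • ∫ v in (0:ℝ)..(2*π), Γ u v := by
    refine Continuous.const_smul (g := fun u => ∫ v in (0:ℝ)..(2*π), Γ u v) ?_ ((2*π)⁻¹ : ℝ)
    exact intervalIntegral.continuous_parametric_intervalIntegral_of_continuous' hcont 0 (2*π)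
  have hproj : ∀ (i : Fin 2) (g : ℝ → EuclideanSpace ℝ (Fin 2)) (a b : ℝ),
      IntervalIntegrable g MeasureTheory.volume a b →
      (∫ u in a..b, g u) i = ∫ u in a..b, (g u) i := by
    intro i g a b hg
    have := (EuclideanSpace.proj (𝕜 := ℝ) i).intervalIntegral_comp_comm hg
    exact this.symm
  have hcomp1 : ∀ i : Fin 2, (∫ u in (0:ℝ)..t, Γ u ((n:ℝ) * u)) i
      = ∫ u in (0:ℝ)..t, ![γ₁ u ((n:ℝ)*u), γ₂ u ((n:ℝ)*u)] i := by
    intro i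
    rw [hproj i _ _ _ (hΓn_cont.intervalIntegrable _ _)]
    rfl
  have hcomp2 : ∀ i : Fin 2, (∫ u in (0:ℝ)..t, (2*π)⁻¹ • ∫ v in (0:ℝ)..(2*π), Γ u v) i
      = ∫ u in (0:ℝ)..t, (2*π)⁻¹ * ∫ v in (0:ℝ)..(2*π), ![γ₁ u v, γ₂ u v] i := by
    intro i
    rw [hproj i _ _ _ (hA_cont.intervalIntegrable _ _)]
    congr 1
    funext u
    have : ((2*π)⁻¹ • ∫ v in (0:ℝ)..(2*π), Γ u v) i
        = (2*π)⁻¹ * ((∫ v in (0:ℝ)..(2*π), Γ u v) i) := rfl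
    have hgu : IntervalIntegrable (fun v => Γ u v) MeasureTheory.volume 0 (2*π) :=
      ((hcont.comp (continuous_const.prodMk continuous_id) :
        Continuous fun v => Γ u v)).intervalIntegrable _ _
    rw [this, hproj i _ _ _ hgu]
    rfl
  -- turn the goal into a norm
  have hx0 : ∀ x : EuclideanSpace ℝ (Fin 2), ‖x‖ = Real.sqrt ((x 0)^2 + (x 1)^2) := by
    intro x
    rw [EuclideanSpace.norm_eq, Fin.sum_univ_two, Real.norm_eq_abs, Real.norm_eq_abs,
      sq_abs, sq_abs]
  rw [show (1 / (2 * π)) = (2*π)⁻¹ from one_div _] at *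
  have hgoal_eq : Real.sqrt
          (((∫ u in (0 : ℝ)..t, γ₁ u (n * u)) -
              ∫ u in (0 : ℝ)..t, (2*π)⁻¹ * ∫ v in (0 : ℝ)..(2 * π), γ₁ u v) ^ 2 +
            ((∫ u in (0 : ℝ)..t, γ₂ u (n * u)) -
              ∫ u in (0 : ℝ)..t, (2*π)⁻¹ * ∫ v in (0 : ℝ)..(2 * π), γ₂ u v) ^ 2)
      = ‖(∫ u in (0:ℝ)..t, Γ u ((n:ℝ) * u)) -
          ∫ u in (0:ℝ)..t, (2*π)⁻¹ • ∫ v in (0:ℝ)..(2*π), Γ u v‖ := by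
    rw [hx0]
    have e0 : ((∫ u in (0:ℝ)..t, Γ u ((n:ℝ) * u)) -
          ∫ u in (0:ℝ)..t, (2*π)⁻¹ • ∫ v in (0:ℝ)..(2*π), Γ u v) 0
        = (∫ u in (0:ℝ)..t, Γ u ((n:ℝ) * u)) 0 -
          (∫ u in (0:ℝ)..t, (2*π)⁻¹ • ∫ v in (0:ℝ)..(2*π), Γ u v) 0 := rfl
    have e1 : ((∫ u in (0:ℝ)..t, Γ u ((n:ℝ) * u)) -
          ∫ u in (0:ℝ)..t, (2*π)⁻¹ • ∫ v in (0:ℝ)..(2*π), Γ u v) 1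
        = (∫ u in (0:ℝ)..t, Γ u ((n:ℝ) * u)) 1 -
          (∫ u in (0:ℝ)..t, (2*π)⁻¹ • ∫ v in (0:ℝ)..(2*π), Γ u v) 1 := rfl
    rw [e0, e1, hcomp1 0, hcomp1 1, hcomp2 0, hcomp2 1]
    norm_num
  rw [hgoal_eq]
  exact key
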